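/- Let d ≥ 1 and let k̂ : ℝ^d → ℝ be measurable with 0 ≤ k̂ ≤ 1 and k̂ ∈ L¹(ℝ^d). Define κ(x) := (2π)^{−d} ∫_{ℝ^d} e^{i λ·x} k̂(λ) dλ. Then for every real-valued Schwartz function f on ℝ^d, the series Σ_{n=1}^∞ (1/n!) ∫_{(ℝ^d)^n} Π_{j=1}^n |e^{i f(x_j)} − 1| · |det( κ(x_i − x_j) )_{i,j=1}^n| dx₁ ⋯ dx_n converges; in fact the n-th term is at most (1/n!) · n^{n/2} · ( (2π)^{−d} ‖k̂‖_{L¹} · ∫_{ℝ^d} |e^{i f(x)} − 1| dx )ⁿ. -/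

import Mathlib

open MeasureTheory Finset Matrix
open scoped ComplexOrder

/-- `κ(x) = (2π)^{-d} ∫ e^{i λ·x} k̂(λ) dλ`. -/
noncomputable def kerFT (d : ℕ) (u : EuclideanSpace ℝ (Fin d) → ℝ)
    (x : EuclideanSpace ℝ (Fin d)) : ℂ :=
  (((2 * Real.pi : ℝ) ^ d)⁻¹ : ℝ) *
    ∫ lam : EuclideanSpace ℝ (Fin d),
      Complex.exp (Complex.I * ((inner ℝ lam x : ℝ) : ℂ)) * (u lam : ℂ)

lemma expI_norm (t : ℝ) : ‖Complex.exp (Complex.I * t)‖ = 1 := by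
  simp [Complex.norm_exp]

lemma expI_sub_one_le (t : ℝ) : ‖Complex.exp (Complex.I * t) - 1‖ ≤ 2 * |t| := by
  rcases le_or_gt (|t|) 1 with h | h
  · have := Complex.norm_exp_sub_one_le (x := Complex.I * t) (by simpa using h)
    simpa using this
  · calc ‖Complex.exp (Complex.I * t) - 1‖ ≤ ‖Complex.exp (Complex.I * t)‖ + ‖(1:ℂ)‖ :=
        norm_sub_le _ _
    _ = 2 := by rw [expI_norm]; norm_num
    _ ≤ 2 * |t| := by nlinarith

lemma kerFT_le (d : ℕ) (u : EuclideanSpace ℝ (Fin d) → ℝ) (hu : ∀ l, 0 ≤ u l)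
    (x : EuclideanSpace ℝ (Fin d)) :
    ‖kerFT d u x‖ ≤ ((2 * Real.pi : ℝ) ^ d)⁻¹ * ∫ l, u l := by
  have hc : (0:ℝ) ≤ ((2 * Real.pi : ℝ) ^ d)⁻¹ := by positivity
  rw [kerFT, norm_mul, Complex.norm_real, Real.norm_eq_abs, abs_of_nonneg hc]
  refine mul_le_mul_of_nonneg_left ?_ hc
  calc ‖∫ lam : EuclideanSpace ℝ (Fin d),
      Complex.exp (Complex.I * ((inner ℝ lam x : ℝ) : ℂ)) * (u lam : ℂ)‖
      ≤ ∫ lam : EuclideanSpace ℝ (Fin d),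
        ‖Complex.exp (Complex.I * ((inner ℝ lam x : ℝ) : ℂ)) * (u lam : ℂ)‖ :=
      norm_integral_le_integral_norm _
    _ = ∫ l, u l := by
      refine integral_congr_ae (Filter.Eventually.of_forall fun l => ?_)
      simp only [norm_mul, expI_norm, one_mul, Complex.norm_real, Real.norm_eq_abs]
      exact abs_of_nonneg (hu l)

lemma g_integrable (d : ℕ) (f : SchwartzMap (EuclideanSpace ℝ (Fin d)) ℝ) :
    Integrable (fun y => ‖Complex.exp (Complex.I * (f y : ℝ)) - 1‖)
      (volume : Measure (EuclideanSpace ℝ (Fin d))) := by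
  have hcont : Continuous (fun y : EuclideanSpace ℝ (Fin d) =>
      ‖Complex.exp (Complex.I * (f y : ℝ)) - 1‖) := by
    fun_prop
  refine Integrable.mono' ((f.integrable).abs.const_mul 2) hcont.aestronglyMeasurable
    (Filter.Eventually.of_forall fun y => ?_)
  rw [norm_norm]
  simpa using expI_sub_one_le (f y)

lemma star_mul_self_eq_normSq (z : ℂ) : star z * z = ((‖z‖ ^ 2 : ℝ) : ℂ) := by
  rw [Complex.star_def, ← Complex.normSq_eq_conj_mul_self, Complex.normSq_eq_norm_sq]

lemma det_entry_bound {n : ℕ} (hn : 1 ≤ n) (A : Matrix (Fin n) (Fin n) ℂ) {C : ℝ}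
    (hC : 0 ≤ C) (h : ∀ i j, ‖A i j‖ ≤ C) :
    ‖A.det‖ ≤ (n : ℝ) ^ ((n : ℝ) / 2) * C ^ n := by
  have hn0 : (0:ℝ) < n := by exact_mod_cast hn
  have hB : (Aᴴ * A).PosSemidef := Matrix.posSemidef_conjTranspose_mul_self A
  have hH : (Aᴴ * A).IsHermitian := hB.isHermitian
  set lam := hH.eigenvalues with hlam
  have hlam0 : ∀ i, 0 ≤ lam i := fun i => hB.eigenvalues_nonneg i
  have hdet : (‖A.det‖ ^ 2 : ℝ) = ∏ i, lam i := by
    have h1 : (Aᴴ * A).det = ((‖A.det‖ ^ 2 : ℝ) : ℂ) := by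
      rw [Matrix.det_mul, Matrix.det_conjTranspose, star_mul_self_eq_normSq]
    have h2 : (Aᴴ * A).det = ((∏ i, lam i : ℝ) : ℂ) := by
      rw [hH.det_eq_prod_eigenvalues]; push_cast; rfl
    exact_mod_cast h1.symm.trans h2
  have htr : ∑ i, lam i = ∑ j, ∑ i, ‖A i j‖ ^ 2 := by
    have h1 : (Aᴴ * A).trace = ((∑ i, lam i : ℝ) : ℂ) := by
      nth_rewrite 1 [hH.spectral_theorem]
      rw [Unitary.conjStarAlgAut_apply, Matrix.trace_mul_cycle,
        Matrix.mem_unitaryGroup_iff'.mp (hH.eigenvectorUnitary).2,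
        Matrix.one_mul, Matrix.trace_diagonal]
      push_cast; rfl
    have h2 : (Aᴴ * A).trace = ((∑ j, ∑ i, ‖A i j‖ ^ 2 : ℝ) : ℂ) := by
      simp only [Matrix.trace, Matrix.diag_apply, Matrix.mul_apply,
        Matrix.conjTranspose_apply, star_mul_self_eq_normSq]
      push_cast
      rfl
    exact_mod_cast h1.symm.trans h2
  have htr_le : ∑ i, lam i ≤ (n:ℝ) * ((n:ℝ) * C ^ 2) := by
    rw [htr]
    calc ∑ j, ∑ i : Fin n, ‖A i j‖ ^ 2 ≤ ∑ _j : Fin n, ∑ _i : Fin n, C ^ 2 := by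
          refine Finset.sum_le_sum fun j _ => Finset.sum_le_sum fun i _ => ?_
          exact pow_le_pow_left₀ (norm_nonneg _) (h i j) 2
      _ = (n:ℝ) * ((n:ℝ) * C ^ 2) := by simp [mul_assoc]
  have hamgm : ∏ i, lam i ≤ ((∑ i, lam i) / n) ^ n := by
    have hw : ∀ i ∈ Finset.univ (α := Fin n), (0:ℝ) ≤ 1 / n := fun _ _ => by positivity
    have hw' : ∑ _i : Fin n, (1:ℝ) / n = 1 := by
      simp only [Finset.sum_const, Finset.card_univ, Fintype.card_fin, nsmul_eq_mul]
      field_simp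
    have hgm := Real.geom_mean_le_arith_mean_weighted Finset.univ (fun _ => 1 / n) lam hw hw'
      (fun i _ => hlam0 i)
    have hpow := pow_le_pow_left₀ (Finset.prod_nonneg fun i _ => Real.rpow_nonneg (hlam0 i) _)
      hgm n
    calc ∏ i, lam i = (∏ i, lam i ^ ((1:ℝ)/n)) ^ n := by
          rw [← Finset.prod_pow]
          refine (Finset.prod_congr rfl fun i _ => ?_).symm
          rw [← Real.rpow_natCast (lam i ^ ((1:ℝ)/n)) n, ← Real.rpow_mul (hlam0 i),
            one_div, inv_mul_cancel₀ (by positivity : (n:ℝ) ≠ 0), Real.rpow_one]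
      _ ≤ (∑ i, 1 / (n:ℝ) * lam i) ^ n := hpow
      _ = ((∑ i, lam i) / n) ^ n := by rw [← Finset.mul_sum]; ring_nf
  have key : ‖A.det‖ ^ 2 ≤ ((n:ℝ) * C ^ 2) ^ n := by
    rw [hdet]
    refine hamgm.trans ?_
    refine pow_le_pow_left₀
      (div_nonneg (Finset.sum_nonneg fun i _ => hlam0 i) hn0.le) ?_ n
    rw [div_le_iff₀ hn0]
    calc ∑ i, lam i ≤ (n:ℝ) * ((n:ℝ) * C ^ 2) := htr_le
      _ = (n:ℝ) * C ^ 2 * n := by ring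
  have hrhs : ((n : ℝ) ^ ((n : ℝ) / 2) * C ^ n) ^ 2 = ((n:ℝ) * C ^ 2) ^ n := by
    have e1 : ((n:ℝ) ^ ((n:ℝ)/2)) ^ 2 = (n:ℝ) ^ (n:ℕ) := by
      rw [← Real.rpow_natCast ((n:ℝ) ^ ((n:ℝ)/2)) 2, ← Real.rpow_mul hn0.le,
        show ((n:ℝ)/2 * ((2:ℕ):ℝ)) = (n:ℝ) by push_cast; ring, Real.rpow_natCast]
    rw [mul_pow, e1]
    ring
  calc ‖A.det‖ = Real.sqrt (‖A.det‖ ^ 2) := (Real.sqrt_sq (norm_nonneg _)).symm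
    _ ≤ Real.sqrt (((n : ℝ) ^ ((n : ℝ) / 2) * C ^ n) ^ 2) :=
        Real.sqrt_le_sqrt (by rw [hrhs]; exact key)
    _ = (n : ℝ) ^ ((n : ℝ) / 2) * C ^ n := Real.sqrt_sq
        (mul_nonneg (Real.rpow_nonneg hn0.le _) (pow_nonneg hC n))

lemma pow_le_factorial_mul_exp (n : ℕ) : (n:ℝ) ^ n ≤ (n.factorial : ℝ) * Real.exp n := by
  have h := Real.sum_le_exp_of_nonneg (x := (n:ℝ)) (Nat.cast_nonneg n) (n+1)
  have hterm : (n:ℝ) ^ n / n.factorial ≤ Real.exp n := by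
    refine le_trans ?_ h
    refine Finset.single_le_sum (f := fun i => (n:ℝ) ^ i / i.factorial)
      (fun i _ => by positivity) (Finset.self_mem_range_succ n)
  rw [div_le_iff₀ (by positivity : (0:ℝ) < (n.factorial:ℝ))] at hterm
  linarith [hterm]

lemma summable_aux {x : ℝ} (hx : 0 ≤ x) :
    Summable (fun n : ℕ => (n:ℝ) ^ ((n:ℝ)/2) * x ^ n / n.factorial) := by
  set s : ℝ := Real.sqrt (Real.exp 1) with hs
  have hs0 : 0 ≤ s := Real.sqrt_nonneg _
  set y : ℝ := x * s with hy
  have hy0 : 0 ≤ y := mul_nonneg hx hs0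
  -- the comparison sequence
  have hc : Summable (fun n : ℕ => y ^ n / Real.sqrt n.factorial) := by
    refine summable_of_ratio_norm_eventually_le (r := 1/2) (by norm_num) ?_
    filter_upwards [Filter.eventually_ge_atTop (⌈4 * y^2⌉₊)] with n hn
    have h1 : (0:ℝ) < Real.sqrt n.factorial := Real.sqrt_pos.mpr (by positivity)
    have h2 : (0:ℝ) < Real.sqrt (n+1).factorial := Real.sqrt_pos.mpr (by positivity)
    have hsucc : Real.sqrt ((n+1).factorial : ℝ)
        = Real.sqrt ((n:ℝ)+1) * Real.sqrt (n.factorial : ℝ) := by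
      rw [← Real.sqrt_mul (by positivity)]
      congr 1
      rw [Nat.factorial_succ]
      push_cast
      ring
    have hge : 2 * y ≤ Real.sqrt ((n:ℝ)+1) := by
      have h4 : 4 * y^2 ≤ (n:ℝ) + 1 := by
        have := Nat.ceil_le.mp (le_refl (⌈4 * y^2⌉₊))
        have h5 : (4 * y^2 : ℝ) ≤ (⌈4 * y^2⌉₊ : ℝ) := Nat.le_ceil _
        have h6 : ((⌈4 * y^2⌉₊ : ℕ) : ℝ) ≤ (n:ℝ) := by exact_mod_cast hn
        linarith
      calc 2 * y = Real.sqrt ((2*y)^2) := (Real.sqrt_sq (by linarith)).symm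
        _ ≤ Real.sqrt ((n:ℝ)+1) := Real.sqrt_le_sqrt (by nlinarith)
    rw [Real.norm_eq_abs, Real.norm_eq_abs, abs_of_nonneg (by positivity),
      abs_of_nonneg (by positivity)]
    rw [hsucc, pow_succ]
    rw [div_le_iff₀ (by positivity), ]
    have expand : 1 / 2 * (y ^ n / Real.sqrt ↑n.factorial) * (Real.sqrt ((n:ℝ) + 1) * Real.sqrt ↑n.factorial)
        = y^n * (Real.sqrt ((n:ℝ)+1) / 2) := by
      field_simp
    rw [expand]
    have : y ≤ Real.sqrt ((n:ℝ)+1) / 2 := by linarith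
    exact mul_le_mul_of_nonneg_left this (pow_nonneg hy0 n) |>.trans_eq (by ring) |>.trans_eq rfl
      |>.trans (le_of_eq rfl)
  refine Summable.of_nonneg_of_le (fun n => by positivity) (fun n => ?_) hc
  -- n^{n/2} x^n / n! ≤ y^n / sqrt n!
  have hfac : (0:ℝ) < (n.factorial : ℝ) := by positivity
  have hsq : Real.sqrt (n.factorial:ℝ) * Real.sqrt (n.factorial:ℝ) = (n.factorial:ℝ) :=
    Real.mul_self_sqrt (by positivity)
  have h1 : (n:ℝ) ^ ((n:ℝ)/2) ≤ Real.sqrt (n.factorial:ℝ) * s ^ n := by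
    have hnn : (n:ℝ) ^ ((n:ℝ)/2) = Real.sqrt ((n:ℝ)^n) := by
      rw [Real.sqrt_eq_rpow, ← Real.rpow_natCast (n:ℝ) n, ← Real.rpow_mul (Nat.cast_nonneg n)]
      ring_nf
    rw [hnn]
    calc Real.sqrt ((n:ℝ)^n) ≤ Real.sqrt ((n.factorial:ℝ) * Real.exp n) :=
          Real.sqrt_le_sqrt (pow_le_factorial_mul_exp n)
      _ = Real.sqrt (n.factorial:ℝ) * Real.sqrt (Real.exp n) :=
          Real.sqrt_mul (by positivity) _
      _ = Real.sqrt (n.factorial:ℝ) * s ^ n := by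
          congr 1
          rw [show Real.exp (n:ℝ) = (s ^ n) ^ 2 by
            rw [← pow_mul, pow_mul', Real.sq_sqrt (Real.exp_nonneg 1), ← Real.exp_nat_mul]
            norm_num]
          exact Real.sqrt_sq (pow_nonneg hs0 n)
  calc (n:ℝ) ^ ((n:ℝ)/2) * x ^ n / n.factorial
      ≤ (Real.sqrt (n.factorial:ℝ) * s ^ n) * x ^ n / n.factorial := by
        gcongr
    _ = y ^ n / Real.sqrt (n.factorial:ℝ) := by
        rw [hy, mul_pow, div_eq_div_iff hfac.ne' (Real.sqrt_pos.mpr hfac).ne']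
        linear_combination (s ^ n * x ^ n) * hsq


/-- absolute convergence of the series in the Fourier-transform formula
(zhgders98) for the fermion measure: the `n`-th term
`(1/n!) ∫_{(ℝ^d)^n} Π_j |e^{i f(x_j)} - 1| · |det(κ(x_i - x_j))| dx` is bounded by
`(1/n!) n^{n/2} ((2π)^{-d} ‖k̂‖_{L¹} ∫ |e^{i f(x)} - 1| dx)ⁿ`, and the series over `n`
converges. -/
theorem stmt8 (d : ℕ) (hd : 1 ≤ d)
    (khat : EuclideanSpace ℝ (Fin d) → ℝ) (hkm : Measurable khat)
    (hk0 : ∀ lam, 0 ≤ khat lam) (hk1 : ∀ lam, khat lam ≤ 1)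
    (hkL1 : Integrable khat (volume : Measure (EuclideanSpace ℝ (Fin d))))
    (f : SchwartzMap (EuclideanSpace ℝ (Fin d)) ℝ) :
    (∀ n : ℕ, 1 ≤ n →
      (1 / (Nat.factorial n : ℝ)) *
          ∫ x : Fin n → EuclideanSpace ℝ (Fin d),
            (∏ j : Fin n, ‖Complex.exp (Complex.I * (f (x j) : ℝ)) - 1‖) *
              ‖(Matrix.of fun i j : Fin n => kerFT d khat (x i - x j)).det‖
        ≤ (1 / (Nat.factorial n : ℝ)) * (n : ℝ) ^ ((n : ℝ) / 2) *
            ((((2 * Real.pi : ℝ) ^ d)⁻¹ * (∫ lam : EuclideanSpace ℝ (Fin d), khat lam) *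
              ∫ y : EuclideanSpace ℝ (Fin d),
                ‖Complex.exp (Complex.I * (f y : ℝ)) - 1‖) ^ n)) ∧
    Summable (fun n : ℕ =>
      (1 / (Nat.factorial n : ℝ)) *
        ∫ x : Fin n → EuclideanSpace ℝ (Fin d),
          (∏ j : Fin n, ‖Complex.exp (Complex.I * (f (x j) : ℝ)) - 1‖) *
            ‖(Matrix.of fun i j : Fin n => kerFT d khat (x i - x j)).det‖) := by
  set g : EuclideanSpace ℝ (Fin d) → ℝ :=
    fun y => ‖Complex.exp (Complex.I * (f y : ℝ)) - 1‖ with hg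
  set C' : ℝ := ((2 * Real.pi : ℝ) ^ d)⁻¹ * ∫ lam : EuclideanSpace ℝ (Fin d), khat lam
    with hC'
  have hC'0 : 0 ≤ C' := mul_nonneg (by positivity) (integral_nonneg hk0)
  have hB0 : 0 ≤ ∫ y, g y := integral_nonneg fun y => norm_nonneg _
  have hgi : Integrable g (volume : Measure (EuclideanSpace ℝ (Fin d))) := g_integrable d f
  have hker : ∀ z, ‖kerFT d khat z‖ ≤ C' := fun z => kerFT_le d khat hk0 z
  set B : ℝ := ∫ y, g y with hBdef
  have part1 : ∀ n : ℕ, 1 ≤ n →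
      (1 / (Nat.factorial n : ℝ)) *
          ∫ x : Fin n → EuclideanSpace ℝ (Fin d),
            (∏ j : Fin n, g (x j)) *
              ‖(Matrix.of fun i j : Fin n => kerFT d khat (x i - x j)).det‖
        ≤ (1 / (Nat.factorial n : ℝ)) * (n : ℝ) ^ ((n : ℝ) / 2) * ((C' * B) ^ n) := by
    intro n hn
    have hint : ∫ x : Fin n → EuclideanSpace ℝ (Fin d),
          (∏ j : Fin n, g (x j)) *
            ‖(Matrix.of fun i j : Fin n => kerFT d khat (x i - x j)).det‖
        ≤ (n : ℝ) ^ ((n : ℝ) / 2) * (C' * B) ^ n := by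
      have hGint : Integrable (fun x : Fin n → EuclideanSpace ℝ (Fin d) =>
          (n : ℝ) ^ ((n : ℝ) / 2) * ∏ j : Fin n, (C' * g (x j))) := by
        exact (Integrable.fintype_prod (f := fun _ : Fin n => fun y => C' * g y)
          (fun _ => hgi.const_mul C')).const_mul _
      have hmono : ∫ x : Fin n → EuclideanSpace ℝ (Fin d),
            (∏ j : Fin n, g (x j)) *
              ‖(Matrix.of fun i j : Fin n => kerFT d khat (x i - x j)).det‖
          ≤ ∫ x : Fin n → EuclideanSpace ℝ (Fin d),
            (n : ℝ) ^ ((n : ℝ) / 2) * ∏ j : Fin n, (C' * g (x j)) := by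
        refine integral_mono_of_nonneg (Filter.Eventually.of_forall fun x => ?_) hGint
          (Filter.Eventually.of_forall fun x => ?_)
        · positivity
        · have hP0 : 0 ≤ ∏ j : Fin n, g (x j) :=
            Finset.prod_nonneg fun j _ => norm_nonneg _
          have hD : ‖(Matrix.of fun i j : Fin n => kerFT d khat (x i - x j)).det‖
              ≤ (n : ℝ) ^ ((n : ℝ) / 2) * C' ^ n :=
            det_entry_bound hn _ hC'0 fun i j => hker (x i - x j)
          calc (∏ j : Fin n, g (x j)) *
                ‖(Matrix.of fun i j : Fin n => kerFT d khat (x i - x j)).det‖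
              ≤ (∏ j : Fin n, g (x j)) * ((n : ℝ) ^ ((n : ℝ) / 2) * C' ^ n) :=
                mul_le_mul_of_nonneg_left hD hP0
            _ = (n : ℝ) ^ ((n : ℝ) / 2) * ∏ j : Fin n, (C' * g (x j)) := by
                rw [Finset.prod_mul_distrib, Finset.prod_const, Finset.card_univ,
                  Fintype.card_fin]
                ring
      refine hmono.trans ?_
      rw [integral_const_mul, MeasureTheory.volume_pi, MeasureTheory.integral_fintype_prod_eq_pow (ι := Fin n)
        (f := fun y => C' * g y), integral_const_mul, Fintype.card_fin]
    calc (1 / (Nat.factorial n : ℝ)) *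
          ∫ x : Fin n → EuclideanSpace ℝ (Fin d),
            (∏ j : Fin n, g (x j)) *
              ‖(Matrix.of fun i j : Fin n => kerFT d khat (x i - x j)).det‖
        ≤ (1 / (Nat.factorial n : ℝ)) * ((n : ℝ) ^ ((n : ℝ) / 2) * (C' * B) ^ n) :=
          mul_le_mul_of_nonneg_left hint (by positivity)
      _ = (1 / (Nat.factorial n : ℝ)) * (n : ℝ) ^ ((n : ℝ) / 2) * ((C' * B) ^ n) := by
          ring
  refine ⟨part1, ?_⟩
  have hterm_nonneg : ∀ m : ℕ, 0 ≤ (1 / (Nat.factorial m : ℝ)) *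
      ∫ x : Fin m → EuclideanSpace ℝ (Fin d),
        (∏ j : Fin m, g (x j)) *
          ‖(Matrix.of fun i j : Fin m => kerFT d khat (x i - x j)).det‖ := by
    intro m
    refine mul_nonneg (by positivity) (integral_nonneg fun x => ?_)
    exact mul_nonneg (Finset.prod_nonneg fun j _ => norm_nonneg _) (norm_nonneg _)
  have hb : Summable (fun m : ℕ => (m:ℝ) ^ ((m:ℝ)/2) * (C' * B) ^ m / m.factorial) :=
    summable_aux (mul_nonneg hC'0 hB0)
  rw [← summable_nat_add_iff 1]
  refine Summable.of_nonneg_of_le (fun m => hterm_nonneg (m+1)) (fun m => ?_)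
    ((summable_nat_add_iff 1).mpr hb)
  refine (part1 (m+1) (Nat.le_add_left 1 m)).trans (le_of_eq ?_)
  ring
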